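/- Let X : Δᵒᵖ → Set be a continuous simplicial set. For every n, the map Xₙ → X₀ⁿ⁺¹ sending an n-simplex to the tuple of its vertices is a bijection onto the set of chains {(x₀, …, xₙ) ∈ X₀ⁿ⁺¹ ∣ xᵢ ≤_X xᵢ₊₁ for all 0 ≤ i < n}. -/

import Mathlib

open CategoryTheory Limits Opposite

/-- A simplicial set `X : Δᵒᵖ ⥤ Type` is *continuous* if it preserves all limits that
exist in `Δᵒᵖ`; equivalently, it takes colimits in `Δ` to limits in `Set`. -/
def IsContinuousSSet (X : SimplexCategoryᵒᵖ ⥤ Type) : Prop :=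
  ∀ ⦃J : Type⦄ [SmallCategory J] (D : J ⥤ SimplexCategoryᵒᵖ) (c : Cone D),
    Nonempty (IsLimit c) → Nonempty (IsLimit (X.mapCone c))

/-- The relation `≤_X` on the `0`-simplices of a simplicial set `X`:
`x ≤_X y` iff there is a `1`-simplex `f` with `d₁ f = x` and `d₀ f = y`. -/
def sSetLe (X : SimplexCategoryᵒᵖ ⥤ Type) (x y : X.obj (op (SimplexCategory.mk 0))) : Prop :=
  ∃ f : X.obj (op (SimplexCategory.mk 1)),
    X.map (SimplexCategory.δ 1).op f = x ∧ X.map (SimplexCategory.δ 0).op f = y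

/-- The `i`-th vertex of an `n`-simplex `σ`: the image of `σ` under the map induced by
the monotone map `[0] → [n]` picking out `i`. -/
def vertex (X : SimplexCategoryᵒᵖ ⥤ Type) (n : ℕ) (σ : X.obj (op (SimplexCategory.mk n)))
    (i : Fin (n + 1)) : X.obj (op (SimplexCategory.mk 0)) :=
  X.map (SimplexCategory.const (SimplexCategory.mk 0) (SimplexCategory.mk n) i).op σ

namespace Stmt8Aux

open SimplexCategory

lemma d1_mkOfSucc {n : ℕ} (j : Fin n) :
    δ 1 ≫ mkOfSucc j = SimplexCategory.const (mk 0) (mk n) j.castSucc :=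
  Hom.ext_zero_left _ _ (by simp [δ, Fin.succAbove])

lemma d0_mkOfSucc {n : ℕ} (j : Fin n) :
    δ 0 ≫ mkOfSucc j = SimplexCategory.const (mk 0) (mk n) j.succ :=
  Hom.ext_zero_left _ _ (by simp [δ, Fin.succAbove])

/-! ### The doubling diagram, whose colimit in `Δ` is `[n]` -/

inductive DblObj (n : ℕ) : Type
  | vert (i : Fin (n+1)) | left | right

inductive DblHom (n : ℕ) : DblObj n → DblObj n → Type
  | id (x : DblObj n) : DblHom n x x
  | lv (i : Fin (n+1)) : DblHom n .left (.vert i)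
  | rv (i : Fin (n+1)) : DblHom n .right (.vert i)

instance (n : ℕ) : SmallCategory (DblObj n) where
  Hom := DblHom n
  id := .id
  comp f g := match f, g with
    | .id _, g => g
    | .lv i, .id _ => .lv i
    | .rv i, .id _ => .rv i
  id_comp := by intro a b f; rfl
  comp_id := by intro a b f; cases f <;> rfl
  assoc := by intro a b c d f g h; cases f <;> cases g <;> cases h <;> rfl

variable (n : ℕ)

def Ddbl : DblObj n ⥤ SimplexCategoryᵒᵖ where
  obj x := match x with
    | .vert _ => op (mk 0)
    | .left => op (mk n)
    | .right => op (mk n)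
  map f := match f with
    | .id _ => 𝟙 _
    | .lv i => (SimplexCategory.const (mk 0) (mk n) i).op
    | .rv i => (SimplexCategory.const (mk 0) (mk n) i).op
  map_id := by intro x; rfl
  map_comp := by
    intro a b c f g; change DblHom n _ _ at f; change DblHom n _ _ at g
    cases f <;> cases g <;> rfl

def cdbl : Cone (Ddbl n) where
  pt := op (mk n)
  π := {
    app := fun x => match x with
      | .vert i => (SimplexCategory.const (mk 0) (mk n) i).op
      | .left => 𝟙 _
      | .right => 𝟙 _
    naturality := by intro a b f; change DblHom n _ _ at f; cases f <;> simp [Ddbl] }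

def isLimitCdbl : IsLimit (cdbl n) where
  lift s := s.π.app .left
  fac := by
    intro s j
    cases j with
    | vert i => simpa [cdbl, Ddbl] using s.w (DblHom.lv i)
    | left => exact Category.comp_id _
    | right =>
      simp only [cdbl]
      erw [Category.comp_id]
      apply Quiver.Hom.unop_inj
      apply SimplexCategory.Hom.ext
      apply OrderHom.ext
      funext i
      have h1 := s.w (DblHom.lv i)
      have h2 := s.w (DblHom.rv i)
      have h3 : s.π.app .left ≫ (Ddbl n).map (DblHom.lv i) =
          s.π.app .right ≫ (Ddbl n).map (DblHom.rv i) := h1.trans h2.symm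
      have h4 := congrArg Quiver.Hom.unop h3
      simp only [unop_comp, Quiver.Hom.unop_op] at h4
      have h5 := congrArg (fun f => SimplexCategory.Hom.toOrderHom f 0) h4
      exact h5
  uniq := by
    intro s m hm
    exact (Category.comp_id m).symm.trans (hm .left)

/-! ### The spine diagram, whose colimit in `Δ` is `[n]` -/

inductive SpObj (n : ℕ) : Type
  | vert (i : Fin (n+1)) | edge (j : Fin n)

inductive SpHom (n : ℕ) : SpObj n → SpObj n → Type
  | id (x : SpObj n) : SpHom n x x
  | src (j : Fin n) : SpHom n (.edge j) (.vert j.castSucc)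
  | tgt (j : Fin n) : SpHom n (.edge j) (.vert j.succ)

instance (n : ℕ) : SmallCategory (SpObj n) where
  Hom := SpHom n
  id := .id
  comp f g := match f, g with
    | .id _, g => g
    | .src j, .id _ => .src j
    | .tgt j, .id _ => .tgt j
  id_comp := by intro a b f; rfl
  comp_id := by intro a b f; cases f <;> rfl
  assoc := by intro a b c d f g h; cases f <;> cases g <;> cases h <;> rfl

def Dsp : SpObj n ⥤ SimplexCategoryᵒᵖ where
  obj x := match x with
    | .vert _ => op (mk 0)
    | .edge _ => op (mk 1)
  map f := match f with
    | .id _ => 𝟙 _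
    | .src _ => (δ 1).op
    | .tgt _ => (δ 0).op
  map_id := by intro x; rfl
  map_comp := by
    intro a b c f g; change SpHom n _ _ at f; change SpHom n _ _ at g
    cases f <;> cases g <;> rfl

def csp : Cone (Dsp n) where
  pt := op (mk n)
  π := {
    app := fun x => match x with
      | .vert i => (SimplexCategory.const (mk 0) (mk n) i).op
      | .edge j => (mkOfSucc j).op
    naturality := by
      intro a b f
      change SpHom n _ _ at f
      cases f with
      | id a => rw [show SpHom.id a = 𝟙 a from rfl]; simp
      | src j =>
        simp only [Functor.const_obj_map, Dsp]
        rw [← op_comp, d1_mkOfSucc]; simp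
      | tgt j =>
        simp only [Functor.const_obj_map, Dsp]
        rw [← op_comp, d0_mkOfSucc]; simp }

def isLimitCsp : IsLimit (csp n) := by
  refine ?_
  have gval : ∀ (s : Cone (Dsp n)) (i : Fin (n+1)),
      True := fun _ _ => trivial
  exact {
    lift := fun s => by
      refine Quiver.Hom.op
        ((SimplexCategory.Hom.mk
          ⟨fun i => ((s.π.app (.vert i)).unop.toOrderHom 0 : Fin ((unop s.pt).len + 1)), ?_⟩ :
          mk n ⟶ unop s.pt))
      rw [Fin.monotone_iff_le_succ]
      intro j
      have h1 := congrArg Quiver.Hom.unop (s.w (SpHom.src j))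
      have h2 := congrArg Quiver.Hom.unop (s.w (SpHom.tgt j))
      simp only [unop_comp, Quiver.Hom.unop_op] at h1 h2
      have e1 := congrArg (fun f => SimplexCategory.Hom.toOrderHom f 0) h1
      have e2 := congrArg (fun f => SimplexCategory.Hom.toOrderHom f 0) h2
      simp only [comp_toOrderHom, OrderHom.comp_coe, Function.comp_apply] at e1 e2
      have hδ : (δ (1 : Fin 2)).toOrderHom 0 ≤ (δ (0 : Fin 2)).toOrderHom 0 := by decide
      exact le_trans (le_of_eq e1.symm)
        (le_trans ((s.π.app (.edge j)).unop.toOrderHom.monotone hδ)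
          (le_of_eq e2))
    fac := by
      intro s j
      cases j with
      | vert i =>
        apply Quiver.Hom.unop_inj
        simp only [csp, unop_comp, Quiver.Hom.unop_op]
        exact (Hom.ext_zero_left _ _ rfl)
      | edge j =>
        apply Quiver.Hom.unop_inj
        simp only [csp, unop_comp, Quiver.Hom.unop_op]
        have h1 := congrArg Quiver.Hom.unop (s.w (SpHom.src j))
        have h2 := congrArg Quiver.Hom.unop (s.w (SpHom.tgt j))
        simp only [unop_comp, Quiver.Hom.unop_op] at h1 h2
        have e1 := congrArg (fun f => SimplexCategory.Hom.toOrderHom f 0) h1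
        have e2 := congrArg (fun f => SimplexCategory.Hom.toOrderHom f 0) h2
        simp only [comp_toOrderHom, OrderHom.comp_coe, Function.comp_apply] at e1 e2
        simp only [Dsp, Quiver.Hom.unop_op] at e1 e2
        refine Hom.ext_one_left _ _ ?_ ?_
        · exact e1.symm
        · exact e2.symm
    uniq := by
      intro s m hm
      apply Quiver.Hom.unop_inj
      apply SimplexCategory.Hom.ext
      apply OrderHom.ext
      funext i
      have h := congrArg Quiver.Hom.unop (hm (.vert i))
      simp only [csp, unop_comp, Quiver.Hom.unop_op] at h
      have e := congrArg (fun f => SimplexCategory.Hom.toOrderHom f 0) h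
      exact e }

end Stmt8Aux

open Stmt8Aux SimplexCategory in
/-- Let `X : Δᵒᵖ → Set` be a continuous simplicial set. For every `n`,
the map `Xₙ → X₀ⁿ⁺¹` sending an `n`-simplex to the tuple of its vertices is a
bijection onto the set of chains
`{(x₀, …, xₙ) ∈ X₀ⁿ⁺¹ ∣ xᵢ ≤_X xᵢ₊₁ for all 0 ≤ i < n}`. -/
theorem vertex_map_bijective_onto_chains (X : SimplexCategoryᵒᵖ ⥤ Type)
    (hX : IsContinuousSSet X) (n : ℕ) :
    Function.Injective (fun σ : X.obj (op (SimplexCategory.mk n)) => vertex X n σ) ∧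
    Set.range (fun σ : X.obj (op (SimplexCategory.mk n)) => vertex X n σ) =
      {c : Fin (n + 1) → X.obj (op (SimplexCategory.mk 0)) |
        ∀ i : Fin n, sSetLe X (c i.castSucc) (c i.succ)} := by
  constructor
  · -- injectivity, via the doubling diagram
    intro σ τ h
    replace h : vertex X n σ = vertex X n τ := h
    obtain ⟨hL⟩ := hX (Ddbl n) (cdbl n) ⟨isLimitCdbl n⟩
    let s : Cone (Ddbl n ⋙ X) := {
      pt := PUnit
      π := {
        app := fun x => match x with
          | .vert i => TypeCat.ofHom fun _ => vertex X n σ i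
          | .left => TypeCat.ofHom fun _ => σ
          | .right => TypeCat.ofHom fun _ => τ
        naturality := by
          intro a b f
          change DblHom n _ _ at f
          cases f with
          | id a => rw [show DblHom.id a = 𝟙 a from rfl]; simp
          | lv i => rfl
          | rv i =>
            ext u
            show vertex X n σ i = X.map ((SimplexCategory.const (mk 0) (mk n) i).op) τ
            rw [h]; rfl } }
    have f1 := ConcreteCategory.congr_hom (hL.fac s .left) PUnit.unit
    have f2 := ConcreteCategory.congr_hom (hL.fac s .right) PUnit.unit
    simp only [Functor.mapCone_π_app, cdbl, types_comp_apply,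
      CategoryTheory.Functor.map_id, types_id_apply] at f1 f2
    exact f1.symm.trans f2
  · -- range = chains, via the spine diagram
    ext c
    constructor
    · rintro ⟨σ, rfl⟩ j
      refine ⟨X.map (mkOfSucc j).op σ, ?_, ?_⟩
      · rw [← FunctorToTypes.map_comp_apply, ← op_comp, d1_mkOfSucc]; rfl
      · rw [← FunctorToTypes.map_comp_apply, ← op_comp, d0_mkOfSucc]; rfl
    · intro hc
      choose f hf1 hf0 using hc
      obtain ⟨hL⟩ := hX (Dsp n) (csp n) ⟨isLimitCsp n⟩
      let s : Cone (Dsp n ⋙ X) := {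
        pt := PUnit
        π := {
          app := fun x => match x with
            | .vert i => TypeCat.ofHom fun _ => c i
            | .edge j => TypeCat.ofHom fun _ => f j
          naturality := by
            intro a b g
            change SpHom n _ _ at g
            cases g with
            | id a => rw [show SpHom.id a = 𝟙 a from rfl]; simp
            | src j =>
              ext u
              show c j.castSucc = X.map ((δ 1).op) (f j)
              exact (hf1 j).symm
            | tgt j =>
              ext u
              show c j.succ = X.map ((δ 0).op) (f j)
              exact (hf0 j).symm } }
      refine ⟨hL.lift s PUnit.unit, ?_⟩
      funext i
      have := ConcreteCategory.congr_hom (hL.fac s (.vert i)) PUnit.unit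
      exact this
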